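/- Let θ : W → S̃ be a locally trivial 𝔸¹-bundle over the blow-up S̃ of a smooth point o of a surface S with exceptional divisor E ≅ ℙ¹_κ, and let π = τ ∘ θ : W → S. If the restriction W|_E → E is a trivial 𝔸¹-bundle (i.e. a line bundle over ℙ¹_κ), then π is not an affine morphism. -/

import Mathlib

open AlgebraicGeometry CategoryTheory

/-- Cancellation for affine morphisms: if `f ≫ g` is affine and `g` is separated,
then `f` is affine. -/
lemma isAffineHom_of_comp {X Y Z : Scheme} (f : X ⟶ Y) (g : Y ⟶ Z)
    [IsAffineHom (f ≫ g)] [IsSeparated g] : IsAffineHom f := by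
  haveI := isAffineHom_isStableUnderBaseChange
  rw [← Limits.pullback.lift_snd (𝟙 _) f (Category.id_comp (f ≫ g))]
  haveI : IsAffineHom (Limits.pullback.snd (f ≫ g) g) :=
    @MorphismProperty.pullback_snd _ _ @IsAffineHom _ _ _ (f ≫ g) g _
      (@MorphismProperty.instIsStableUnderBaseChangeAlongOfIsStableUnderBaseChange _ _ _
        isAffineHom_isStableUnderBaseChange _ _ g) inferInstance
  infer_instance

theorem stmt_14 {κ : Type*} [Field κ] (W S' S E : Scheme)
    (θ : W ⟶ S') (τ : S' ⟶ S) (iE : E ⟶ S') [IsClosedImmersion iE]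
    (q : E ⟶ Spec (CommRingCat.of κ)) [IsProper q]
    (pt : Spec (CommRingCat.of κ) ⟶ S) (hcontr : iE ≫ τ = q ≫ pt)
    (σ : E ⟶ W) (hσ : σ ≫ θ = iE) [IsClosedImmersion σ]
    (hE : ¬ IsAffine E) :
    ¬ IsAffineHom (θ ≫ τ) := by
  intro h
  have h1 : IsAffineHom (σ ≫ θ ≫ τ) := inferInstance
  rw [← Category.assoc, hσ, hcontr] at h1
  haveI := h1
  haveI : IsAffineHom q := isAffineHom_of_comp q pt
  exact hE (isAffine_of_isAffineHom q)
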